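/- Let q(x,ξ) = (1/2) c(x) ξ² + 2 ∫_{(0,∞)} (1 − cos(ξ y)) ν(x,dy) be a one-dimensional symmetric symbol (bounded c ≥ 0, Lévy kernel ν with sup_x ∫ min{1,y²} ν(x,dy) < ∞), and set N(x,y) := ν(x, (y,∞)) for x ∈ ℝ, y > 0. Then: (a) if ∫_ρ^∞ ( sup_{x∈ℝ} ∫_0^r y N(x,y) dy )^{-1} dr = ∞ for some ρ > 0, then there exists r > 0 with ∫_{{|ξ|<r}} dξ / sup_{x∈ℝ} q(x,ξ) = ∞; (b) if there exists r > 0 with ∫_{{|ξ|<r}} dξ / inf_{x∈ℝ} q(x,ξ) < ∞, then ∫_ρ^∞ ( inf_{x∈ℝ} ∫_0^r y N(x,y) dy )^{-1} dr < ∞ for all sufficiently large ρ > 0. -/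

import Mathlib

open MeasureTheory Filter Topology
open scoped ENNReal

/-- A one-dimensional symmetric symbol:
`q(x,ξ) = (1/2)c(x)ξ² + 2∫_{(0,∞)} (1 − cos(ξy)) ν(x,dy)`, valued in `[0,∞]`. -/
noncomputable def oneDimSymbol (c : ℝ → ℝ) (ν : ℝ → MeasureTheory.Measure ℝ)
    (x ξ : ℝ) : ℝ≥0∞ :=
  ENNReal.ofReal ((1 / 2) * c x * ξ ^ 2) +
    2 * ∫⁻ y in Set.Ioi (0 : ℝ), ENNReal.ofReal (1 - Real.cos (ξ * y)) ∂(ν x)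

section Stmt15Aux
open Set

namespace Stmt15Aux
open intervalIntegral

lemma lint_id {m : ℝ} (hm : 0 ≤ m) :
    ∫⁻ y in Set.Ioc (0:ℝ) m, ENNReal.ofReal y = ENNReal.ofReal (m^2/2) := by
  rw [← ofReal_integral_eq_lintegral_ofReal]
  · rw [← intervalIntegral.integral_of_le hm]
    have h : (∫ x in (0:ℝ)..m, x) = (m^2 - 0^2)/2 := integral_id
    rw [h]
    norm_num
  · exact continuous_id.integrableOn_Ioc
  · exact (ae_restrict_iff' measurableSet_Ioc).2 (ae_of_all _ fun y hy => hy.1.le)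

lemma lint_id' {m : ℝ} (hm : 0 ≤ m) :
    ∫⁻ y in Set.Ioo (0:ℝ) m, ENNReal.ofReal y = ENNReal.ofReal (m^2/2) := by
  rw [Measure.restrict_congr_set Ioo_ae_eq_Ioc, lint_id hm]

lemma sigmaFinite_restrict (μ : Measure ℝ)
    (h : ∫⁻ y in Set.Ioi (0:ℝ), ENNReal.ofReal (min 1 (y ^ 2)) ∂μ ≠ ∞) :
    SigmaFinite (μ.restrict (Set.Ioi (0:ℝ))) := by
  constructor; constructor
  refine ⟨fun n => Set.Ioi (((n:ℝ)+1)⁻¹) ∪ Set.Iic 0, fun _ => trivial, ?_, ?_⟩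
  · intro n
    set ε : ℝ := ((n:ℝ)+1)⁻¹ with hε
    have hpos : (0:ℝ) < ε := by positivity
    have hsub : Set.Ioi ε ⊆ Set.Ioi (0:ℝ) := fun y hy => lt_trans hpos hy
    have hset : (Set.Ioi ε ∪ Set.Iic 0) ∩ Set.Ioi 0 = Set.Ioi ε := by
      ext y
      constructor
      · rintro ⟨hy1 | hy1, hy2⟩
        · exact hy1
        · exact absurd (Set.mem_Ioi.1 hy2) (not_lt.2 hy1)
      · exact fun hy => ⟨Or.inl hy, hsub hy⟩
    rw [Measure.restrict_apply' measurableSet_Ioi, hset]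
    have key : ENNReal.ofReal (min 1 (ε^2)) * μ (Set.Ioi ε)
        ≤ ∫⁻ y in Set.Ioi (0:ℝ), ENNReal.ofReal (min 1 (y ^ 2)) ∂μ := by
      rw [← setLIntegral_const]
      refine le_trans (setLIntegral_mono' measurableSet_Ioi fun y hy => ?_)
        (lintegral_mono_set hsub)
      refine ENNReal.ofReal_le_ofReal (min_le_min le_rfl ?_)
      exact pow_le_pow_left₀ hpos.le (le_of_lt hy) 2
    have hne : ENNReal.ofReal (min 1 (ε^2)) ≠ 0 := by
      simp only [ne_eq, ENNReal.ofReal_eq_zero, not_le]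
      exact lt_min one_pos (by positivity)
    by_contra htop
    rw [not_lt, top_le_iff] at htop
    rw [htop, ENNReal.mul_top hne] at key
    exact h (top_le_iff.1 key)
  · ext y
    simp only [Set.mem_iUnion, Set.mem_union, Set.mem_Ioi, Set.mem_Iic, Set.mem_univ, iff_true]
    rcases le_or_gt y 0 with hy | hy
    · exact ⟨0, Or.inr hy⟩
    · obtain ⟨n, hn⟩ := exists_nat_gt y⁻¹
      refine ⟨n, Or.inl ?_⟩
      have h1 : (0:ℝ) < (n:ℝ)+1 := by positivity
      rw [inv_lt_comm₀ h1 hy]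
      exact lt_trans hn (by linarith)

lemma tonelli (μ : Measure ℝ) [SigmaFinite μ] {r : ℝ} (hr : 0 < r) :
    ∫⁻ y in Set.Ioc (0:ℝ) r, ENNReal.ofReal y * μ (Set.Ioi y) =
      ∫⁻ z in Set.Ioi (0:ℝ), ENNReal.ofReal ((min r z)^2/2) ∂μ := by
  set f : ℝ → ℝ → ℝ≥0∞ := fun y z => (Set.Ioi y).indicator (fun _ => ENNReal.ofReal y) z with hf
  have h1 : ∀ y : ℝ, ENNReal.ofReal y * μ (Set.Ioi y) = ∫⁻ z, f y z ∂μ := by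
    intro y
    rw [hf]
    simp only []
    rw [lintegral_indicator measurableSet_Ioi, setLIntegral_const]
  have hmeas : Measurable (Function.uncurry f) := by
    have : Function.uncurry f =
        Set.indicator {p : ℝ × ℝ | p.1 < p.2} (fun p => ENNReal.ofReal p.1) := by
      ext ⟨y, z⟩
      by_cases hyz : y < z
      · simp [f, Function.uncurry, Set.indicator, hyz]
      · simp [f, Function.uncurry, Set.indicator, hyz]
    rw [this]
    exact (ENNReal.measurable_ofReal.comp measurable_fst).indicator
      (measurableSet_lt measurable_fst measurable_snd)
  calc ∫⁻ y in Set.Ioc (0:ℝ) r, ENNReal.ofReal y * μ (Set.Ioi y)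
      = ∫⁻ y in Set.Ioc (0:ℝ) r, ∫⁻ z, f y z ∂μ := lintegral_congr fun y => h1 y
    _ = ∫⁻ z, (∫⁻ y in Set.Ioc (0:ℝ) r, f y z) ∂μ :=
        lintegral_lintegral_swap hmeas.aemeasurable
    _ = ∫⁻ z, (Set.Ioi (0:ℝ)).indicator (fun z => ENNReal.ofReal ((min r z)^2/2)) z ∂μ := by
        refine lintegral_congr fun z => ?_
        have hfz : ∀ y : ℝ, f y z = (Set.Iio z).indicator (fun y => ENNReal.ofReal y) y := by
          intro y
          by_cases hyz : y < z
          · simp [f, Set.indicator, hyz]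
          · simp [f, Set.indicator, hyz]
        rw [lintegral_congr hfz, lintegral_indicator measurableSet_Iio,
          Measure.restrict_restrict measurableSet_Iio]
        rcases le_or_gt z 0 with hz | hz
        · have : Set.Iio z ∩ Set.Ioc (0:ℝ) r = ∅ := by
            ext y
            simp only [Set.mem_inter_iff, Set.mem_Iio, Set.mem_Ioc, Set.mem_empty_iff_false,
              iff_false]
            rintro ⟨h1, h2, _⟩
            linarith
          rw [this]
          simp [Set.indicator, not_lt.2 hz]
        · rw [Set.indicator_of_mem (Set.mem_Ioi.2 hz)]
          rcases le_or_gt z r with hzr | hzr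
          · have : Set.Iio z ∩ Set.Ioc (0:ℝ) r = Set.Ioo 0 z := by
              ext y
              simp only [Set.mem_inter_iff, Set.mem_Iio, Set.mem_Ioc, Set.mem_Ioo]
              constructor
              · rintro ⟨h1, h2, _⟩; exact ⟨h2, h1⟩
              · rintro ⟨h1, h2⟩; exact ⟨h2, h1, le_trans h2.le hzr⟩
            rw [this, lint_id' hz.le, min_eq_right hzr]
          · have : Set.Iio z ∩ Set.Ioc (0:ℝ) r = Set.Ioc 0 r := by
              ext y
              simp only [Set.mem_inter_iff, Set.mem_Iio, Set.mem_Ioc]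
              constructor
              · rintro ⟨_, h2⟩; exact h2
              · rintro ⟨h1, h2⟩; exact ⟨lt_of_le_of_lt h2 hzr, h1, h2⟩
            rw [this, lint_id hr.le, min_eq_left hzr.le]
    _ = ∫⁻ z in Set.Ioi (0:ℝ), ENNReal.ofReal ((min r z)^2/2) ∂μ :=
        lintegral_indicator measurableSet_Ioi _

lemma one_sub_cos_le {ξ : ℝ} (hξ : ξ ≠ 0) (y : ℝ) :
    1 - Real.cos (ξ*y) ≤ 4*ξ^2 * ((min |ξ|⁻¹ y)^2/2) := by
  have habs : (0:ℝ) < |ξ| := abs_pos.2 hξ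
  have ht : (0:ℝ) < |ξ|⁻¹ := inv_pos.2 habs
  have h2 : ∀ u : ℝ, 1 - Real.cos u ≤ u^2/2 := by
    intro u
    have h1 := Real.cos_two_mul (u/2)
    rw [show 2*(u/2) = u by ring] at h1
    nlinarith [Real.sin_sq_le_sq (x := u/2), Real.sin_sq_add_cos_sq (u/2)]
  rcases le_or_gt y |ξ|⁻¹ with hy | hy
  · rw [min_eq_right hy]
    nlinarith [h2 (ξ*y), sq_nonneg (ξ*y)]
  · rw [min_eq_left hy.le]
    have hξ2 : ξ^2 ≠ 0 := pow_ne_zero 2 hξ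
    have hval : 4*ξ^2 * ((|ξ|⁻¹)^2/2) = 2 := by
      rw [inv_pow, sq_abs]
      field_simp
      ring
    rw [hval]
    linarith [Real.neg_one_le_cos (ξ*y)]



lemma symbol_bound (c : ℝ → ℝ) (ν : ℝ → Measure ℝ) {K : ℝ}
    (hc : ∀ x, 0 ≤ c x) (hK : ∀ x, c x ≤ K)
    (hνx : ∀ x, ∫⁻ y in Set.Ioi (0:ℝ), ENNReal.ofReal (min 1 (y ^ 2)) ∂(ν x) ≠ ∞)
    (x : ℝ) {ξ : ℝ} (hξ : ξ ≠ 0) :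
    oneDimSymbol c ν x ξ ≤ ENNReal.ofReal (ξ^2) *
      (ENNReal.ofReal (K/2) +
        8 * ∫⁻ y in Set.Ioc (0:ℝ) |ξ|⁻¹, ENNReal.ofReal y * ν x (Set.Ioi y)) := by
  haveI := sigmaFinite_restrict (ν x) (hνx x)
  have habs : (0:ℝ) < |ξ| := abs_pos.2 hξ
  have ht : (0:ℝ) < |ξ|⁻¹ := inv_pos.2 habs
  set t : ℝ := |ξ|⁻¹ with htdef
  -- Tonelli identity for the tail-integral
  have hG : ∫⁻ y in Set.Ioc (0:ℝ) t, ENNReal.ofReal y * ν x (Set.Ioi y)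
      = ∫⁻ z in Set.Ioi (0:ℝ), ENNReal.ofReal ((min t z)^2/2) ∂(ν x) := by
    have h1 := tonelli ((ν x).restrict (Set.Ioi (0:ℝ))) ht
    have h2 : ∫⁻ y in Set.Ioc (0:ℝ) t,
        ENNReal.ofReal y * ((ν x).restrict (Set.Ioi (0:ℝ))) (Set.Ioi y)
        = ∫⁻ y in Set.Ioc (0:ℝ) t, ENNReal.ofReal y * ν x (Set.Ioi y) := by
      refine setLIntegral_congr_fun measurableSet_Ioc (fun y hy => ?_)
      rw [Measure.restrict_apply measurableSet_Ioi,
        Set.inter_eq_self_of_subset_left (Set.Ioi_subset_Ioi hy.1.le)]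
    have h3 : (∫⁻ z in Set.Ioi (0:ℝ), ENNReal.ofReal ((min t z)^2/2)
          ∂((ν x).restrict (Set.Ioi (0:ℝ))))
        = ∫⁻ z in Set.Ioi (0:ℝ), ENNReal.ofReal ((min t z)^2/2) ∂(ν x) := by
      rw [Measure.restrict_restrict measurableSet_Ioi, Set.inter_self]
    rw [← h2, h1, h3]
  -- bound on the integral of 1 - cos
  have hI : ∫⁻ y in Set.Ioi (0:ℝ), ENNReal.ofReal (1 - Real.cos (ξ * y)) ∂(ν x)
      ≤ ENNReal.ofReal (4*ξ^2) *
        ∫⁻ y in Set.Ioc (0:ℝ) t, ENNReal.ofReal y * ν x (Set.Ioi y) := by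
    rw [hG, ← lintegral_const_mul' _ _ ENNReal.ofReal_ne_top]
    refine lintegral_mono fun y => ?_
    rw [← ENNReal.ofReal_mul (by positivity)]
    exact ENNReal.ofReal_le_ofReal (one_sub_cos_le hξ y)
  have hT1 : ENNReal.ofReal ((1/2) * c x * ξ^2)
      ≤ ENNReal.ofReal (ξ^2) * ENNReal.ofReal (K/2) := by
    rw [← ENNReal.ofReal_mul (sq_nonneg ξ)]
    refine ENNReal.ofReal_le_ofReal ?_
    nlinarith [hK x, sq_nonneg ξ, hc x]
  have hmul : (2:ℝ≥0∞) * ENNReal.ofReal (4*ξ^2) = ENNReal.ofReal (ξ^2) * 8 := by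
    rw [show (2:ℝ≥0∞) = ENNReal.ofReal 2 from (ENNReal.ofReal_ofNat 2).symm,
      show (8:ℝ≥0∞) = ENNReal.ofReal 8 from (ENNReal.ofReal_ofNat 8).symm,
      ← ENNReal.ofReal_mul (by norm_num), ← ENNReal.ofReal_mul (sq_nonneg ξ)]
    congr 1
    ring
  calc oneDimSymbol c ν x ξ
      ≤ ENNReal.ofReal (ξ^2) * ENNReal.ofReal (K/2) +
        2 * (ENNReal.ofReal (4*ξ^2) *
          ∫⁻ y in Set.Ioc (0:ℝ) t, ENNReal.ofReal y * ν x (Set.Ioi y)) :=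
        add_le_add hT1 (mul_le_mul_right hI 2)
    _ = ENNReal.ofReal (ξ^2) * ENNReal.ofReal (K/2) +
        ENNReal.ofReal (ξ^2) *
          (8 * ∫⁻ y in Set.Ioc (0:ℝ) t, ENNReal.ofReal y * ν x (Set.Ioi y)) := by
        rw [← mul_assoc, ← mul_assoc, hmul]
    _ = _ := by rw [← mul_add]

lemma G_zero {μ : Measure ℝ} {ρ : ℝ} (hρ : 0 < ρ)
    (h : ∫⁻ y in Set.Ioc (0:ℝ) ρ, ENNReal.ofReal y * μ (Set.Ioi y) = 0) (r : ℝ) :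
    ∫⁻ y in Set.Ioc (0:ℝ) r, ENNReal.ofReal y * μ (Set.Ioi y) = 0 := by
  have hN1 : ∀ s : ℝ, 0 < s → s ≤ ρ → μ (Set.Ioi s) = 0 := by
    intro s hs hsρ
    have hle : ∫⁻ _ in Set.Ioc (s/2) s, (ENNReal.ofReal (s/2) * μ (Set.Ioi s))
        ≤ ∫⁻ y in Set.Ioc (0:ℝ) ρ, ENNReal.ofReal y * μ (Set.Ioi y) := by
      refine le_trans (setLIntegral_mono' measurableSet_Ioc fun y hy => ?_)
        (lintegral_mono_set (Set.Ioc_subset_Ioc (by linarith) hsρ))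
      exact mul_le_mul' (ENNReal.ofReal_le_ofReal hy.1.le)
        (measure_mono (Set.Ioi_subset_Ioi hy.2))
    rw [h, le_zero_iff, setLIntegral_const, Real.volume_Ioc] at hle
    have h1 : ENNReal.ofReal (s/2) ≠ 0 := by
      simp only [ne_eq, ENNReal.ofReal_eq_zero, not_le]; linarith
    have h2 : ENNReal.ofReal (s - s/2) ≠ 0 := by
      simp only [ne_eq, ENNReal.ofReal_eq_zero, not_le]; linarith
    simpa [mul_eq_zero, h1, h2] using hle
  have hN : ∀ s : ℝ, 0 < s → μ (Set.Ioi s) = 0 := by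
    intro s hs
    rcases le_or_gt s ρ with hsρ | hsρ
    · exact hN1 s hs hsρ
    · exact measure_mono_null (Set.Ioi_subset_Ioi hsρ.le) (hN1 ρ hρ le_rfl)
  calc ∫⁻ y in Set.Ioc (0:ℝ) r, ENNReal.ofReal y * μ (Set.Ioi y)
      = ∫⁻ _ in Set.Ioc (0:ℝ) r, (0:ℝ≥0∞) := by
        refine setLIntegral_congr_fun measurableSet_Ioc (fun y hy => ?_)
        rw [hN y hy.1, mul_zero]
    _ = 0 := lintegral_zero

lemma cov {ρ : ℝ} (hρ : 0 < ρ) (g : ℝ → ℝ≥0∞) :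
    ∫⁻ ξ in Set.Ioo (0:ℝ) ρ⁻¹, g ξ =
      ∫⁻ s in Set.Ioi ρ, ENNReal.ofReal ((s^2)⁻¹) * g s⁻¹ := by
  have himg : (fun s : ℝ => s⁻¹) '' Set.Ioi ρ = Set.Ioo 0 ρ⁻¹ := by
    ext y
    constructor
    · rintro ⟨s, hs, rfl⟩
      have hsp : 0 < s := lt_trans hρ hs
      exact ⟨inv_pos.2 hsp, inv_strictAnti₀ hρ hs⟩
    · rintro ⟨hy1, hy2⟩
      refine ⟨y⁻¹, ?_, inv_inv y⟩
      have := inv_strictAnti₀ hy1 hy2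
      rwa [inv_inv] at this
  rw [← himg]
  rw [lintegral_image_eq_lintegral_abs_det_fderiv_mul (μ := volume) measurableSet_Ioi
    (f' := fun s : ℝ => (1 : ℝ →L[ℝ] ℝ).smulRight (-(s^2)⁻¹))
    (fun s hs => ((hasDerivAt_inv
      (ne_of_gt (lt_trans hρ hs))).hasDerivWithinAt).hasFDerivWithinAt)
    (fun a _ b _ hab => inv_injective hab) g]
  refine lintegral_congr fun s => ?_
  rw [ContinuousLinearMap.det_smulRight, ContinuousLinearMap.one_apply, one_mul, abs_neg, abs_inv, abs_of_nonneg (sq_nonneg s)]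

end Stmt15Aux

end Stmt15Aux

set_option maxHeartbeats 1000000 in
/-- sufficient conditions for the Chung–Fuchs conditions in terms of the
tail function `N(x,y) = ν(x,(y,∞))` of the Lévy kernel. -/
theorem stmt15 (c : ℝ → ℝ) (ν : ℝ → MeasureTheory.Measure ℝ)
    (hc : ∀ x, 0 ≤ c x) (hcb : ∃ K : ℝ, ∀ x, c x ≤ K)
    (hν : (⨆ x, ∫⁻ y in Set.Ioi (0 : ℝ), ENNReal.ofReal (min 1 (y ^ 2)) ∂(ν x)) < ∞)
    (hms : Measurable fun ξ : ℝ => ⨆ x, oneDimSymbol c ν x ξ)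
    (hmi : Measurable fun ξ : ℝ => ⨅ x, oneDimSymbol c ν x ξ)
    (hmNs : Measurable fun r : ℝ =>
      ⨆ x, ∫⁻ y in Set.Ioc (0 : ℝ) r, ENNReal.ofReal y * ν x (Set.Ioi y))
    (hmNi : Measurable fun r : ℝ =>
      ⨅ x, ∫⁻ y in Set.Ioc (0 : ℝ) r, ENNReal.ofReal y * ν x (Set.Ioi y)) :
    -- (a)
    ((∃ ρ > (0 : ℝ), ∫⁻ r in Set.Ioi ρ,
        (⨆ x, ∫⁻ y in Set.Ioc (0 : ℝ) r, ENNReal.ofReal y * ν x (Set.Ioi y))⁻¹ = ∞) →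
      ∃ r > (0 : ℝ), ∫⁻ ξ in Metric.ball (0 : ℝ) r,
        (⨆ x, oneDimSymbol c ν x ξ)⁻¹ = ∞) ∧
    -- (b)
    ((∃ r > (0 : ℝ), ∫⁻ ξ in Metric.ball (0 : ℝ) r,
        (⨅ x, oneDimSymbol c ν x ξ)⁻¹ < ∞) →
      ∃ ρ₀ > (0 : ℝ), ∀ ρ : ℝ, ρ₀ ≤ ρ →
        ∫⁻ r in Set.Ioi ρ,
          (⨅ x, ∫⁻ y in Set.Ioc (0 : ℝ) r, ENNReal.ofReal y * ν x (Set.Ioi y))⁻¹ < ∞) := by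
  clear hms hmi hmNs hmNi
  obtain ⟨K₀, hK₀⟩ := hcb
  set K : ℝ := max K₀ 0 with hKdef
  have hK : ∀ x, c x ≤ K := fun x => le_trans (hK₀ x) (le_max_left _ _)
  have hK0 : (0:ℝ) ≤ K := le_max_right _ _
  have hνx : ∀ x, ∫⁻ y in Set.Ioi (0:ℝ), ENNReal.ofReal (min 1 (y^2)) ∂(ν x) ≠ ∞ :=
    fun x => (lt_of_le_of_lt (le_iSup (fun x => ∫⁻ y in Set.Ioi (0:ℝ),
      ENNReal.ofReal (min 1 (y^2)) ∂(ν x)) x) hν).ne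
  have hGmono : ∀ (x : ℝ) {r r' : ℝ}, r ≤ r' →
      (∫⁻ y in Set.Ioc (0:ℝ) r, ENNReal.ofReal y * ν x (Set.Ioi y)) ≤
        ∫⁻ y in Set.Ioc (0:ℝ) r', ENNReal.ofReal y * ν x (Set.Ioi y) := by
    intro x r r' h
    exact lintegral_mono_set (Set.Ioc_subset_Ioc_right h)
  have hbound : ∀ (x s : ℝ), 0 < s →
      oneDimSymbol c ν x s⁻¹ ≤ ENNReal.ofReal ((s^2)⁻¹) *
        (ENNReal.ofReal (K/2) +
          8 * ∫⁻ y in Set.Ioc (0:ℝ) s, ENNReal.ofReal y * ν x (Set.Ioi y)) := by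
    intro x s hs
    have h := Stmt15Aux.symbol_bound c ν hc hK hνx x (ξ := s⁻¹) (inv_ne_zero hs.ne')
    rwa [abs_of_pos (inv_pos.2 hs), inv_inv, inv_pow] at h
  have hA0 : ∀ s : ℝ, 0 < s → ENNReal.ofReal ((s^2)⁻¹) ≠ 0 := by
    intro s hs
    simp only [ne_eq, ENNReal.ofReal_eq_zero, not_le]
    positivity
  have hKhalf : ENNReal.ofReal (K/2) + ENNReal.ofReal (K/2) = ENNReal.ofReal K := by
    rw [← ENNReal.ofReal_add (by linarith) (by linarith)]
    congr 1
    ring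
  constructor
  · -- part (a)
    rintro ⟨ρ, hρ, hint⟩
    refine ⟨ρ⁻¹, inv_pos.2 hρ, ?_⟩
    have hsub : Set.Ioo (0:ℝ) ρ⁻¹ ⊆ Metric.ball (0:ℝ) ρ⁻¹ := by
      intro ξ hξ
      rw [Metric.mem_ball, Real.dist_eq, sub_zero, abs_of_pos hξ.1]
      exact hξ.2
    -- the comparison integral is infinite
    have hD : ∫⁻ s in Set.Ioi ρ, (ENNReal.ofReal (K/2) +
        8 * ⨆ x, ∫⁻ y in Set.Ioc (0:ℝ) s, ENNReal.ofReal y * ν x (Set.Ioi y))⁻¹ = ∞ := by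
      by_cases hS0 : (⨆ x, ∫⁻ y in Set.Ioc (0:ℝ) ρ, ENNReal.ofReal y * ν x (Set.Ioi y)) = 0
      · -- the Lévy kernel vanishes: the sup is constant
        have hz : ∀ x, ∫⁻ y in Set.Ioc (0:ℝ) ρ, ENNReal.ofReal y * ν x (Set.Ioi y) = 0 :=
          ENNReal.iSup_eq_zero.1 hS0
        have hSr : ∀ s : ℝ,
            (⨆ x, ∫⁻ y in Set.Ioc (0:ℝ) s, ENNReal.ofReal y * ν x (Set.Ioi y)) = 0 :=
          fun s => ENNReal.iSup_eq_zero.2 fun x => Stmt15Aux.G_zero hρ (hz x) s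
        rw [setLIntegral_congr_fun measurableSet_Ioi (fun s _ => by
            rw [hSr s, mul_zero, add_zero]),
          setLIntegral_const, Real.volume_Ioi, ENNReal.mul_top
            (ENNReal.inv_ne_zero.2 ENNReal.ofReal_ne_top)]
      · by_cases hex : ∃ r₀ ∈ Set.Ioi ρ, ENNReal.ofReal (K/2) ≤
            8 * ⨆ x, ∫⁻ y in Set.Ioc (0:ℝ) r₀, ENNReal.ofReal y * ν x (Set.Ioi y)
        · obtain ⟨r₀, hr₀, hKS⟩ := hex
          have hSmono : ∀ {r r' : ℝ}, r ≤ r' →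
              (⨆ x, ∫⁻ y in Set.Ioc (0:ℝ) r, ENNReal.ofReal y * ν x (Set.Ioi y)) ≤
                ⨆ x, ∫⁻ y in Set.Ioc (0:ℝ) r', ENNReal.ofReal y * ν x (Set.Ioi y) :=
            fun h => iSup_mono fun x => hGmono x h
          -- the piece of the integral on (ρ, r₀] is finite
          have h1 : ∫⁻ s in Set.Ioc ρ r₀,
              (⨆ x, ∫⁻ y in Set.Ioc (0:ℝ) s, ENNReal.ofReal y * ν x (Set.Ioi y))⁻¹ ≠ ∞ := by
            refine ne_top_of_le_ne_top ?_
              (setLIntegral_mono' measurableSet_Ioc fun s hs =>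
                ENNReal.inv_le_inv.2 (hSmono hs.1.le))
            rw [setLIntegral_const]
            exact (ENNReal.mul_lt_top (ENNReal.inv_lt_top.2 (pos_iff_ne_zero.2 hS0))
              (by rw [Real.volume_Ioc]; exact ENNReal.ofReal_lt_top)).ne
          have h2 : ∫⁻ s in Set.Ioi r₀,
              (⨆ x, ∫⁻ y in Set.Ioc (0:ℝ) s, ENNReal.ofReal y * ν x (Set.Ioi y))⁻¹ = ∞ := by
            rw [show Set.Ioi ρ = Set.Ioc ρ r₀ ∪ Set.Ioi r₀ from
                (Set.Ioc_union_Ioi_eq_Ioi (le_of_lt hr₀)).symm,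
              lintegral_union measurableSet_Ioi (Set.Ioc_disjoint_Ioi le_rfl)] at hint
            by_contra hB
            exact (ENNReal.add_ne_top.2 ⟨h1, hB⟩) hint
          refine top_unique ?_
          calc (⊤:ℝ≥0∞) = 16⁻¹ * ∫⁻ s in Set.Ioi r₀,
                (⨆ x, ∫⁻ y in Set.Ioc (0:ℝ) s, ENNReal.ofReal y * ν x (Set.Ioi y))⁻¹ := by
                rw [h2, ENNReal.mul_top (ENNReal.inv_ne_zero.2 (by norm_num))]
            _ = ∫⁻ s in Set.Ioi r₀, 16⁻¹ *
                (⨆ x, ∫⁻ y in Set.Ioc (0:ℝ) s, ENNReal.ofReal y * ν x (Set.Ioi y))⁻¹ :=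
                (lintegral_const_mul' _ _ (ENNReal.inv_ne_top.2 (by norm_num))).symm
            _ ≤ ∫⁻ s in Set.Ioi r₀, (ENNReal.ofReal (K/2) +
                8 * ⨆ x, ∫⁻ y in Set.Ioc (0:ℝ) s, ENNReal.ofReal y * ν x (Set.Ioi y))⁻¹ := by
                refine setLIntegral_mono' measurableSet_Ioi fun s hs => ?_
                rw [← ENNReal.mul_inv (Or.inl (by norm_num)) (Or.inl (by norm_num))]
                refine ENNReal.inv_le_inv.2 ?_
                calc ENNReal.ofReal (K/2) +
                    8 * ⨆ x, ∫⁻ y in Set.Ioc (0:ℝ) s, ENNReal.ofReal y * ν x (Set.Ioi y)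
                    ≤ (8 * ⨆ x, ∫⁻ y in Set.Ioc (0:ℝ) s,
                        ENNReal.ofReal y * ν x (Set.Ioi y)) +
                      8 * ⨆ x, ∫⁻ y in Set.Ioc (0:ℝ) s,
                        ENNReal.ofReal y * ν x (Set.Ioi y) :=
                      add_le_add_left (hKS.trans (mul_le_mul_right
                        (hSmono (le_of_lt (Set.mem_Ioi.1 hs))) 8)) _
                  _ = 16 * ⨆ x, ∫⁻ y in Set.Ioc (0:ℝ) s,
                        ENNReal.ofReal y * ν x (Set.Ioi y) := by
                      rw [← add_mul]
                      norm_num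
            _ ≤ ∫⁻ s in Set.Ioi ρ, (ENNReal.ofReal (K/2) +
                8 * ⨆ x, ∫⁻ y in Set.Ioc (0:ℝ) s, ENNReal.ofReal y * ν x (Set.Ioi y))⁻¹ :=
                lintegral_mono_set (Set.Ioi_subset_Ioi (le_of_lt hr₀))
        · push_neg at hex
          refine top_unique ?_
          calc (⊤:ℝ≥0∞) = (ENNReal.ofReal K)⁻¹ * volume (Set.Ioi ρ) := by
                rw [Real.volume_Ioi, ENNReal.mul_top
                  (ENNReal.inv_ne_zero.2 ENNReal.ofReal_ne_top)]
            _ = ∫⁻ _ in Set.Ioi ρ, (ENNReal.ofReal K)⁻¹ := (setLIntegral_const _ _).symm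
            _ ≤ ∫⁻ s in Set.Ioi ρ, (ENNReal.ofReal (K/2) +
                8 * ⨆ x, ∫⁻ y in Set.Ioc (0:ℝ) s, ENNReal.ofReal y * ν x (Set.Ioi y))⁻¹ := by
                refine setLIntegral_mono' measurableSet_Ioi fun s hs => ?_
                refine ENNReal.inv_le_inv.2 ?_
                calc ENNReal.ofReal (K/2) +
                    8 * ⨆ x, ∫⁻ y in Set.Ioc (0:ℝ) s, ENNReal.ofReal y * ν x (Set.Ioi y)
                    ≤ ENNReal.ofReal (K/2) + ENNReal.ofReal (K/2) :=
                      add_le_add_right (le_of_lt (hex s hs)) _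
                  _ = ENNReal.ofReal K := hKhalf
    refine top_unique ?_
    calc (⊤:ℝ≥0∞) = ∫⁻ s in Set.Ioi ρ, (ENNReal.ofReal (K/2) +
          8 * ⨆ x, ∫⁻ y in Set.Ioc (0:ℝ) s, ENNReal.ofReal y * ν x (Set.Ioi y))⁻¹ := hD.symm
      _ ≤ ∫⁻ s in Set.Ioi ρ,
            ENNReal.ofReal ((s^2)⁻¹) * (⨆ x, oneDimSymbol c ν x s⁻¹)⁻¹ := by
          refine setLIntegral_mono' measurableSet_Ioi fun s hs => ?_
          have hsp : (0:ℝ) < s := lt_trans hρ (Set.mem_Ioi.1 hs)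
          have hAq : (⨆ x, oneDimSymbol c ν x s⁻¹) ≤ ENNReal.ofReal ((s^2)⁻¹) *
              (ENNReal.ofReal (K/2) +
                8 * ⨆ x, ∫⁻ y in Set.Ioc (0:ℝ) s, ENNReal.ofReal y * ν x (Set.Ioi y)) := by
            refine iSup_le fun x => le_trans (hbound x s hsp) ?_
            refine mul_le_mul_right (add_le_add_right (mul_le_mul_right ?_ 8) _) _
            exact le_iSup (fun x => ∫⁻ y in Set.Ioc (0:ℝ) s,
              ENNReal.ofReal y * ν x (Set.Ioi y)) x
          calc (ENNReal.ofReal (K/2) +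
              8 * ⨆ x, ∫⁻ y in Set.Ioc (0:ℝ) s, ENNReal.ofReal y * ν x (Set.Ioi y))⁻¹
              = ENNReal.ofReal ((s^2)⁻¹) * ((ENNReal.ofReal ((s^2)⁻¹))⁻¹ *
                (ENNReal.ofReal (K/2) + 8 * ⨆ x, ∫⁻ y in Set.Ioc (0:ℝ) s,
                  ENNReal.ofReal y * ν x (Set.Ioi y))⁻¹) := by
                rw [← mul_assoc, ENNReal.mul_inv_cancel (hA0 s hsp) ENNReal.ofReal_ne_top,
                  one_mul]
            _ = ENNReal.ofReal ((s^2)⁻¹) * (ENNReal.ofReal ((s^2)⁻¹) *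
                (ENNReal.ofReal (K/2) + 8 * ⨆ x, ∫⁻ y in Set.Ioc (0:ℝ) s,
                  ENNReal.ofReal y * ν x (Set.Ioi y)))⁻¹ := by
                rw [ENNReal.mul_inv (Or.inl (hA0 s hsp)) (Or.inl ENNReal.ofReal_ne_top)]
            _ ≤ ENNReal.ofReal ((s^2)⁻¹) * (⨆ x, oneDimSymbol c ν x s⁻¹)⁻¹ :=
                mul_le_mul_right (ENNReal.inv_le_inv.2 hAq) _
      _ = ∫⁻ ξ in Set.Ioo (0:ℝ) ρ⁻¹, (⨆ x, oneDimSymbol c ν x ξ)⁻¹ :=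
            (Stmt15Aux.cov hρ (fun ξ => (⨆ x, oneDimSymbol c ν x ξ)⁻¹)).symm
      _ ≤ ∫⁻ ξ in Metric.ball (0:ℝ) ρ⁻¹, (⨆ x, oneDimSymbol c ν x ξ)⁻¹ :=
            lintegral_mono_set hsub
  · -- part (b)
    rintro ⟨r, hr, hfin⟩
    have ha : (0:ℝ) < r⁻¹ := inv_pos.2 hr
    have hsub : Set.Ioo (0:ℝ) r ⊆ Metric.ball (0:ℝ) r := by
      intro ξ hξ
      rw [Metric.mem_ball, Real.dist_eq, sub_zero, abs_of_pos hξ.1]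
      exact hξ.2
    -- the inf version of the symbol bound
    have hIq : ∀ s : ℝ, 0 < s → (⨅ x, oneDimSymbol c ν x s⁻¹) ≤
        ENNReal.ofReal ((s^2)⁻¹) * (ENNReal.ofReal (K/2) +
          8 * ⨅ x, ∫⁻ y in Set.Ioc (0:ℝ) s, ENNReal.ofReal y * ν x (Set.Ioi y)) := by
      intro s hs
      refine le_trans (iInf_mono fun x => hbound x s hs) (le_of_eq ?_)
      rw [ENNReal.mul_iInf_of_ne (show (8:ℝ≥0∞) ≠ 0 by norm_num)
          (show (8:ℝ≥0∞) ≠ ⊤ by norm_num), ENNReal.add_iInf,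
        ← ENNReal.mul_iInf_of_ne (hA0 s hs) ENNReal.ofReal_ne_top]
    -- the comparison integral is finite
    have hJ : ∫⁻ s in Set.Ioi r⁻¹, (ENNReal.ofReal (K/2) +
        8 * ⨅ x, ∫⁻ y in Set.Ioc (0:ℝ) s, ENNReal.ofReal y * ν x (Set.Ioi y))⁻¹ ≠ ∞ := by
      refine ne_top_of_le_ne_top (ne_of_lt hfin) ?_
      calc ∫⁻ s in Set.Ioi r⁻¹, (ENNReal.ofReal (K/2) +
            8 * ⨅ x, ∫⁻ y in Set.Ioc (0:ℝ) s, ENNReal.ofReal y * ν x (Set.Ioi y))⁻¹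
          ≤ ∫⁻ s in Set.Ioi r⁻¹,
              ENNReal.ofReal ((s^2)⁻¹) * (⨅ x, oneDimSymbol c ν x s⁻¹)⁻¹ := by
            refine setLIntegral_mono' measurableSet_Ioi fun s hs => ?_
            have hsp : (0:ℝ) < s := lt_trans ha (Set.mem_Ioi.1 hs)
            calc (ENNReal.ofReal (K/2) +
                8 * ⨅ x, ∫⁻ y in Set.Ioc (0:ℝ) s, ENNReal.ofReal y * ν x (Set.Ioi y))⁻¹
                = ENNReal.ofReal ((s^2)⁻¹) * ((ENNReal.ofReal ((s^2)⁻¹))⁻¹ *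
                  (ENNReal.ofReal (K/2) + 8 * ⨅ x, ∫⁻ y in Set.Ioc (0:ℝ) s,
                    ENNReal.ofReal y * ν x (Set.Ioi y))⁻¹) := by
                  rw [← mul_assoc, ENNReal.mul_inv_cancel (hA0 s hsp)
                    ENNReal.ofReal_ne_top, one_mul]
              _ = ENNReal.ofReal ((s^2)⁻¹) * (ENNReal.ofReal ((s^2)⁻¹) *
                  (ENNReal.ofReal (K/2) + 8 * ⨅ x, ∫⁻ y in Set.Ioc (0:ℝ) s,
                    ENNReal.ofReal y * ν x (Set.Ioi y)))⁻¹ := by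
                  rw [ENNReal.mul_inv (Or.inl (hA0 s hsp)) (Or.inl ENNReal.ofReal_ne_top)]
              _ ≤ ENNReal.ofReal ((s^2)⁻¹) * (⨅ x, oneDimSymbol c ν x s⁻¹)⁻¹ :=
                  mul_le_mul_right (ENNReal.inv_le_inv.2 (hIq s hsp)) _
        _ = ∫⁻ ξ in Set.Ioo (0:ℝ) (r⁻¹)⁻¹, (⨅ x, oneDimSymbol c ν x ξ)⁻¹ :=
            (Stmt15Aux.cov ha (fun ξ => (⨅ x, oneDimSymbol c ν x ξ)⁻¹)).symm
        _ ≤ ∫⁻ ξ in Metric.ball (0:ℝ) r, (⨅ x, oneDimSymbol c ν x ξ)⁻¹ := by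
            rw [inv_inv]
            exact lintegral_mono_set hsub
    -- find the threshold
    have hex : ∃ s₀ ∈ Set.Ioi r⁻¹, ENNReal.ofReal (K/2) ≤
        8 * ⨅ x, ∫⁻ y in Set.Ioc (0:ℝ) s₀, ENNReal.ofReal y * ν x (Set.Ioi y) := by
      by_contra hno
      push_neg at hno
      refine hJ (top_unique ?_)
      calc (⊤:ℝ≥0∞) = (ENNReal.ofReal K)⁻¹ * volume (Set.Ioi r⁻¹) := by
            rw [Real.volume_Ioi, ENNReal.mul_top
              (ENNReal.inv_ne_zero.2 ENNReal.ofReal_ne_top)]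
        _ = ∫⁻ _ in Set.Ioi r⁻¹, (ENNReal.ofReal K)⁻¹ := (setLIntegral_const _ _).symm
        _ ≤ ∫⁻ s in Set.Ioi r⁻¹, (ENNReal.ofReal (K/2) +
            8 * ⨅ x, ∫⁻ y in Set.Ioc (0:ℝ) s, ENNReal.ofReal y * ν x (Set.Ioi y))⁻¹ := by
            refine setLIntegral_mono' measurableSet_Ioi fun s hs => ?_
            refine ENNReal.inv_le_inv.2 ?_
            calc ENNReal.ofReal (K/2) +
                8 * ⨅ x, ∫⁻ y in Set.Ioc (0:ℝ) s, ENNReal.ofReal y * ν x (Set.Ioi y)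
                ≤ ENNReal.ofReal (K/2) + ENNReal.ofReal (K/2) :=
                  add_le_add_right (le_of_lt (hno s hs)) _
              _ = ENNReal.ofReal K := hKhalf
    obtain ⟨s₀, hs₀a, hs₀⟩ := hex
    have hs₀pos : (0:ℝ) < s₀ := lt_trans ha (Set.mem_Ioi.1 hs₀a)
    refine ⟨s₀, hs₀pos, fun ρ hρs => ?_⟩
    have hgmono : ∀ {u u' : ℝ}, u ≤ u' →
        (⨅ x, ∫⁻ y in Set.Ioc (0:ℝ) u, ENNReal.ofReal y * ν x (Set.Ioi y)) ≤
          ⨅ x, ∫⁻ y in Set.Ioc (0:ℝ) u', ENNReal.ofReal y * ν x (Set.Ioi y) :=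
      fun h => iInf_mono fun x => hGmono x h
    calc ∫⁻ s in Set.Ioi ρ,
          (⨅ x, ∫⁻ y in Set.Ioc (0:ℝ) s, ENNReal.ofReal y * ν x (Set.Ioi y))⁻¹
        ≤ ∫⁻ s in Set.Ioi ρ, 16 * (ENNReal.ofReal (K/2) +
            8 * ⨅ x, ∫⁻ y in Set.Ioc (0:ℝ) s, ENNReal.ofReal y * ν x (Set.Ioi y))⁻¹ := by
          refine setLIntegral_mono' measurableSet_Ioi fun s hs => ?_
          have hss₀ : s₀ ≤ s := le_trans hρs (le_of_lt (Set.mem_Ioi.1 hs))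
          have h16 : ENNReal.ofReal (K/2) +
              8 * ⨅ x, ∫⁻ y in Set.Ioc (0:ℝ) s, ENNReal.ofReal y * ν x (Set.Ioi y)
              ≤ 16 * ⨅ x, ∫⁻ y in Set.Ioc (0:ℝ) s, ENNReal.ofReal y * ν x (Set.Ioi y) := by
            calc ENNReal.ofReal (K/2) +
                8 * ⨅ x, ∫⁻ y in Set.Ioc (0:ℝ) s, ENNReal.ofReal y * ν x (Set.Ioi y)
                ≤ (8 * ⨅ x, ∫⁻ y in Set.Ioc (0:ℝ) s,
                    ENNReal.ofReal y * ν x (Set.Ioi y)) +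
                  8 * ⨅ x, ∫⁻ y in Set.Ioc (0:ℝ) s, ENNReal.ofReal y * ν x (Set.Ioi y) :=
                  add_le_add_left (hs₀.trans (mul_le_mul_right (hgmono hss₀) 8)) _
              _ = 16 * ⨅ x, ∫⁻ y in Set.Ioc (0:ℝ) s,
                    ENNReal.ofReal y * ν x (Set.Ioi y) := by
                  rw [← add_mul]
                  norm_num
          calc (⨅ x, ∫⁻ y in Set.Ioc (0:ℝ) s, ENNReal.ofReal y * ν x (Set.Ioi y))⁻¹
              = 16 * (16 * ⨅ x, ∫⁻ y in Set.Ioc (0:ℝ) s,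
                  ENNReal.ofReal y * ν x (Set.Ioi y))⁻¹ := by
                rw [ENNReal.mul_inv (Or.inl (by norm_num)) (Or.inl (by norm_num)),
                  ← mul_assoc, ENNReal.mul_inv_cancel (by norm_num) (by norm_num), one_mul]
            _ ≤ 16 * (ENNReal.ofReal (K/2) + 8 * ⨅ x, ∫⁻ y in Set.Ioc (0:ℝ) s,
                  ENNReal.ofReal y * ν x (Set.Ioi y))⁻¹ :=
                mul_le_mul_right (ENNReal.inv_le_inv.2 h16) 16
      _ = 16 * ∫⁻ s in Set.Ioi ρ, (ENNReal.ofReal (K/2) +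
            8 * ⨅ x, ∫⁻ y in Set.Ioc (0:ℝ) s, ENNReal.ofReal y * ν x (Set.Ioi y))⁻¹ :=
          lintegral_const_mul' _ _ (by norm_num)
      _ ≤ 16 * ∫⁻ s in Set.Ioi r⁻¹, (ENNReal.ofReal (K/2) +
            8 * ⨅ x, ∫⁻ y in Set.Ioc (0:ℝ) s, ENNReal.ofReal y * ν x (Set.Ioi y))⁻¹ :=
          mul_le_mul_right (lintegral_mono_set (Set.Ioi_subset_Ioi
            (le_trans (le_of_lt (Set.mem_Ioi.1 hs₀a)) hρs))) 16
      _ < ⊤ := ENNReal.mul_lt_top (by norm_num) (lt_top_iff_ne_top.2 hJ)
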